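/- Let Ω be a topological space, X a locally convex space, V a family of nonnegative upper semicontinuous weights, W ⊆ F(Ω, X), f : Ω → X, A ⊆ C(Ω, ℂ) a multiplier of W, p a continuous seminorm on X, v ∈ V. Assume f − g ∈ CV₀(Ω, X) for all g ∈ W (i.e., for every ε > 0 the closed set {x : v(x)p(f(x)−g(x)) ≥ ε} is compact). Then there exists an (A, v)-antisymmetric set S ⊆ supp v such that d_{v,p,S}(f, W) = d_{v,p,Ω}(f, W). -/

import Mathlib

open scoped ENNReal

/-- The weighted sup-distance `d_{v,p,E}(f, W)` valued in `ℝ≥0∞`. -/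
noncomputable def wDistOn {Ω X : Type*} [AddCommGroup X] [Module ℂ X]
    (p : Seminorm ℂ X) (v : Ω → ℝ) (E : Set Ω) (f : Ω → X)
    (W : Set (Ω → X)) : ℝ≥0∞ :=
  ⨅ g ∈ W, ⨆ x ∈ E, ENNReal.ofReal (v x * p (f x - g x))


open Set
set_option maxHeartbeats 1000000


lemma aux_usc {Ω : Type*} [TopologicalSpace Ω] {v c : Ω → ℝ}
    (hv : UpperSemicontinuous v) (hv0 : ∀ x, 0 ≤ v x)
    (hc : Continuous c) (hc0 : ∀ x, 0 ≤ c x) :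
    UpperSemicontinuous (fun x => v x * c x) := by
  intro x₀ y hy
  simp only at hy
  set a := v x₀; set b := c x₀
  have ha : 0 ≤ a := hv0 x₀
  have hb : 0 ≤ b := hc0 x₀
  have hab : 0 < y - a*b := by linarith
  obtain ⟨ε, hε, hεy⟩ : ∃ ε > (0:ℝ), (a + ε) * (b + ε) < y := by
    refine ⟨min 1 ((y - a*b)/(2*(a+b+1))), ?_, ?_⟩
    · have : 0 < (y - a*b)/(2*(a+b+1)) := by positivity
      exact lt_min one_pos this
    · have h1 : min 1 ((y - a*b)/(2*(a+b+1))) ≤ 1 := min_le_left _ _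
      have h2 : min 1 ((y - a*b)/(2*(a+b+1))) ≤ (y - a*b)/(2*(a+b+1)) := min_le_right _ _
      have h3 : 0 < min 1 ((y - a*b)/(2*(a+b+1))) := by
        have : 0 < (y - a*b)/(2*(a+b+1)) := by positivity
        exact lt_min one_pos this
      set ε := min 1 ((y - a*b)/(2*(a+b+1)))
      have : ε * (2*(a+b+1)) ≤ y - a*b := by
        rw [← le_div_iff₀ (by positivity)]; exact h2
      nlinarith
  have h1 : ∀ᶠ x in nhds x₀, v x < a + ε := hv x₀ (a + ε) (by linarith)
  have h2 : ∀ᶠ x in nhds x₀, c x < b + ε :=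
    (hc.tendsto x₀).eventually_lt_const (by linarith)
  filter_upwards [h1, h2] with x hx1 hx2
  calc v x * c x < (a + ε) * (b + ε) :=
        mul_lt_mul'' hx1 hx2 (hv0 x) (hc0 x)
    _ < y := hεy

lemma aux_bdd {Ω : Type*} [TopologicalSpace Ω] {u : Ω → ℝ}
    (husc : UpperSemicontinuous u) (hK : IsCompact {x | 1 ≤ u x}) :
    ∃ M : ℝ, 0 ≤ M ∧ ∀ x, u x ≤ M := by
  have hcov : {x | 1 ≤ u x} ⊆ ⋃ n : ℕ, u ⁻¹' Iio (n : ℝ) := by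
    intro x _
    obtain ⟨n, hn⟩ := exists_nat_gt (u x)
    exact mem_iUnion.2 ⟨n, hn⟩
  obtain ⟨t, ht⟩ := hK.elim_finite_subcover (fun n : ℕ => u ⁻¹' Iio (n : ℝ))
    (fun n => husc.isOpen_preimage _) hcov
  refine ⟨max 1 (t.sup id : ℕ), le_trans zero_le_one (le_max_left _ _), fun x => ?_⟩
  by_cases hx : 1 ≤ u x
  · obtain ⟨n, hn, hxn⟩ := mem_iUnion₂.1 (ht hx)
    have : (n : ℝ) ≤ (t.sup id : ℕ) := by
      exact_mod_cast Nat.cast_le.2 (Finset.le_sup (f := id) hn)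
    exact le_trans (le_of_lt hxn) (le_trans this (le_max_right _ _))
  · exact le_trans (le_of_not_ge hx) (le_max_left _ _)

lemma aux_peak {c₁ c₂ δ : ℝ} (h1 : 0 < c₁) (h12 : c₁ < c₂) (h21 : c₂ < 1) (hδ : 0 < δ) :
    ∃ n m : ℕ,
      (∀ t : ℝ, 0 ≤ t → t ≤ 1 → 0 ≤ 1 - (1 - t^n)^m ∧ 1 - (1 - t^n)^m ≤ 1) ∧
      (∀ t : ℝ, 0 ≤ t → t ≤ c₁ → 1 - (1 - t^n)^m ≤ δ) ∧
      (∀ t : ℝ, c₂ ≤ t → t ≤ 1 → (1 - t^n)^m ≤ δ) := by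
  obtain ⟨c₃, h3a, h3b⟩ : ∃ c₃, c₁ < c₃ ∧ c₃ < c₂ := ⟨(c₁+c₂)/2, by linarith, by linarith⟩
  have h3pos : 0 < c₃ := by linarith
  have h31 : c₃ < 1 := by linarith
  have hc2pos : 0 < c₂ := by linarith
  have hq1 : c₁ / c₃ < 1 := (div_lt_one h3pos).2 h3a
  have hq2 : c₃ / c₂ < 1 := (div_lt_one hc2pos).2 h3b
  have hq1p : 0 < c₁ / c₃ := div_pos h1 h3pos
  have hq2p : 0 < c₃ / c₂ := div_pos h3pos hc2pos
  obtain ⟨n, hn⟩ := exists_pow_lt_of_lt_one (show (0:ℝ) < δ/2 by linarith)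
    (max_lt hq1 hq2)
  have hn1 : (c₁/c₃)^n < δ/2 := lt_of_le_of_lt
    (pow_le_pow_left₀ hq1p.le (le_max_left _ _) n) hn
  have hn2 : (c₃/c₂)^n < δ/2 := lt_of_le_of_lt
    (pow_le_pow_left₀ hq2p.le (le_max_right _ _) n) hn
  obtain ⟨m, hmge, hmle⟩ : ∃ m : ℕ, (1/c₃)^n ≤ (m:ℝ) ∧ (m:ℝ) ≤ (1/c₃)^n + 1 :=
    ⟨⌈(1/c₃)^n⌉₊, Nat.le_ceil _, (Nat.ceil_lt_add_one (by positivity)).le⟩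
  refine ⟨n, m, ?_, ?_, ?_⟩
  · intro t ht0 ht1
    have h1' : 0 ≤ t^n := pow_nonneg ht0 n
    have h2' : t^n ≤ 1 := pow_le_one₀ ht0 ht1
    have h3' : 0 ≤ (1 - t^n)^m := pow_nonneg (by linarith) _
    have h4' : (1 - t^n)^m ≤ 1 := pow_le_one₀ (by linarith) (by linarith)
    constructor <;> linarith
  · intro t ht0 htc
    have ht1 : t ≤ 1 := le_trans htc (by linarith)
    have h1' : 0 ≤ t^n := pow_nonneg ht0 n
    have h2' : t^n ≤ 1 := pow_le_one₀ ht0 ht1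
    have hber : 1 + (m:ℝ) * (-(t^n)) ≤ (1 + (-(t^n)))^m :=
      one_add_mul_le_pow (by linarith) m
    have htn : t^n ≤ c₁^n := pow_le_pow_left₀ ht0 htc n
    have key : (m:ℝ) * t^n ≤ δ := by
      have e1 : (m:ℝ) * t^n ≤ ((1/c₃)^n + 1) * c₁^n :=
        mul_le_mul hmle htn h1' (by positivity)
      have e2 : ((1/c₃)^n + 1) * c₁^n = (c₁/c₃)^n + c₁^n := by
        rw [add_mul, one_mul, ← mul_pow]
        congr 2
        field_simp
      have e3 : c₁^n ≤ (c₁/c₃)^n := by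
        apply pow_le_pow_left₀ h1.le
        rw [le_div_iff₀ h3pos]
        nlinarith
      linarith
    have hber' : 1 - (m:ℝ) * t^n ≤ (1 - t^n)^m := by
      rw [show (1:ℝ) + -t^n = 1 - t^n by ring] at hber
      linarith
    linarith
  · intro t htc ht1
    have ht0 : 0 ≤ t := le_trans hc2pos.le htc
    have h1' : 0 ≤ t^n := pow_nonneg ht0 n
    have h2' : t^n ≤ 1 := pow_le_one₀ ht0 ht1
    have hcn : c₂^n ≤ t^n := pow_le_pow_left₀ hc2pos.le htc n
    have hc2n : 0 < c₂^n := pow_pos hc2pos n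
    have step1 : (1 - t^n)^m ≤ (1 - c₂^n)^m :=
      pow_le_pow_left₀ (by linarith) (by linarith) m
    have hmc : 0 < (m:ℝ) * c₂^n := by
      have h5 : (0:ℝ) < (1/c₃)^n := by positivity
      nlinarith
    have hber2 : 1 + (m:ℝ) * c₂^n ≤ (1 + c₂^n)^m :=
      one_add_mul_le_pow (by linarith) m
    have step2 : (1 - c₂^n)^m ≤ 1 / (1 + (m:ℝ) * c₂^n) := by
      rw [le_div_iff₀ (by linarith)]
      calc (1 - c₂^n)^m * (1 + (m:ℝ) * c₂^n)
          ≤ (1 - c₂^n)^m * (1 + c₂^n)^m :=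
            mul_le_mul_of_nonneg_left hber2 (pow_nonneg (by linarith) m)
        _ = ((1 - c₂^n) * (1 + c₂^n))^m := (mul_pow _ _ m).symm
        _ ≤ 1 := by
            have hc2le : c₂^n ≤ 1 := pow_le_one₀ hc2pos.le h21.le
            apply pow_le_one₀ <;> nlinarith
    have hqn : (0:ℝ) < (c₃/c₂)^n := pow_pos hq2p n
    have step3 : 1 / (1 + (m:ℝ) * c₂^n) ≤ (c₃/c₂)^n := by
      rw [div_le_iff₀ (by linarith)]
      have e2 : (c₃/c₂)^n * ((1/c₃)^n * c₂^n) = ((c₃/c₂) * ((1/c₃) * c₂))^n := by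
        rw [mul_pow, mul_pow]
      have e2' : (c₃/c₂) * ((1/c₃) * c₂) = 1 := by field_simp
      calc (1:ℝ) = (c₃/c₂)^n * ((1/c₃)^n * c₂^n) := by rw [e2, e2', one_pow]
        _ ≤ (c₃/c₂)^n * ((m:ℝ) * c₂^n) :=
            mul_le_mul_of_nonneg_left
              (mul_le_mul_of_nonneg_right hmge hc2n.le) hqn.le
        _ ≤ (c₃/c₂)^n * (1 + (m:ℝ) * c₂^n) :=
            mul_le_mul_of_nonneg_left (by linarith) hqn.le
    linarith


def IsMultOf {Ω X : Type*} [AddCommGroup X] [Module ℂ X] (W : Set (Ω → X))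
    (ψ : Ω → ℂ) : Prop :=
  ∀ g ∈ W, ∀ h ∈ W, (fun x => ψ x • g x + (1 - ψ x) • h x) ∈ W

namespace IsMultOf

variable {Ω X : Type*} [AddCommGroup X] [Module ℂ X] {W : Set (Ω → X)} {ψ ψ₁ ψ₂ : Ω → ℂ}

lemma one : IsMultOf W (fun _ => 1) := by
  intro g hg h hh
  show (fun x => (1:ℂ) • g x + (1 - 1) • h x) ∈ W
  have he : (fun x => (1:ℂ) • g x + ((1:ℂ) - 1) • h x) = g := by
    funext x; simp
  exact Set.mem_of_eq_of_mem he hg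

lemma compl (hψ : IsMultOf W ψ) : IsMultOf W (fun x => 1 - ψ x) := by
  intro g hg h hh
  show (fun x => (1 - ψ x) • g x + (1 - (1 - ψ x)) • h x) ∈ W
  have h1 := hψ h hh g hg
  have : (fun x => (1 - ψ x) • g x + (1 - (1 - ψ x)) • h x)
      = (fun x => ψ x • h x + (1 - ψ x) • g x) := by
    funext x; module
  exact Set.mem_of_eq_of_mem this h1

lemma mul (h₁ : IsMultOf W ψ₁) (h₂ : IsMultOf W ψ₂) :
    IsMultOf W (fun x => ψ₁ x * ψ₂ x) := by
  intro g hg h hh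
  show (fun x => (ψ₁ x * ψ₂ x) • g x + (1 - ψ₁ x * ψ₂ x) • h x) ∈ W
  have hk := h₂ g hg h hh
  have h1 := h₁ _ hk h hh
  have : (fun x => (ψ₁ x * ψ₂ x) • g x + (1 - ψ₁ x * ψ₂ x) • h x)
      = (fun x => ψ₁ x • (ψ₂ x • g x + (1 - ψ₂ x) • h x) + (1 - ψ₁ x) • h x) := by
    funext x; module
  exact Set.mem_of_eq_of_mem this h1

lemma pow (hψ : IsMultOf W ψ) : ∀ n : ℕ, IsMultOf W (fun x => ψ x ^ n)
  | 0 => by simpa using one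
  | (n+1) => by
      have h1 := (pow hψ n).mul hψ
      have he : (fun x => ψ x ^ (n+1)) = (fun x => ψ x ^ n * ψ x) := by
        funext x; rw [_root_.pow_succ]
      rw [he]; exact h1

lemma peak (hψ : IsMultOf W ψ) (n m : ℕ) :
    IsMultOf W (fun x => 1 - (1 - ψ x ^ n) ^ m) :=
  ((hψ.pow n).compl.pow m).compl

end IsMultOf


theorem stmt_11 {Ω X : Type*} [TopologicalSpace Ω] [AddCommGroup X]
    [Module ℂ X] [TopologicalSpace X] [IsTopologicalAddGroup X]
    [ContinuousSMul ℂ X] [LocallyConvexSpace ℝ X]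
    (p : Seminorm ℂ X) (hp : Continuous p)
    (v : Ω → ℝ) (hv0 : ∀ x, 0 ≤ v x) (hvusc : UpperSemicontinuous v)
    (W : Set (Ω → X)) (f : Ω → X) (A : Set (Ω → ℂ))
    (hAc : ∀ φ ∈ A, Continuous φ)
    (hmul : ∀ φ ∈ A, ∀ g ∈ W, ∀ h ∈ W,
      (fun x => φ x • g x + (1 - φ x) • h x) ∈ W)
    (hC : ∀ g ∈ W, Continuous (fun x => f x - g x))
    (h0 : ∀ g ∈ W, ∀ ε > (0 : ℝ),
      IsCompact {x : Ω | ε ≤ v x * p (f x - g x)}) :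
    ∃ S : Set Ω, S ⊆ closure {x : Ω | v x ≠ 0} ∧
      (∀ φ ∈ A, (∀ x ∈ S, φ x ∈ Complex.ofReal '' Set.Icc (0 : ℝ) 1) →
        ∀ x ∈ S, ∀ y ∈ S, φ x = φ y) ∧
      wDistOn p v S f W = wDistOn p v Set.univ f W := by
  classical
  by_cases hW : W.Nonempty
  swap
  · refine ⟨∅, empty_subset _, fun φ _ _ x hx => absurd hx (notMem_empty x), ?_⟩
    rw [not_nonempty_iff_eq_empty] at hW
    simp [wDistOn, hW]
  haveI : Nonempty W := hW.to_subtype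
  set u : (Ω → X) → Ω → ℝ := fun g x => v x * p (f x - g x) with hu
  have hu0 : ∀ g x, 0 ≤ u g x := fun g x => mul_nonneg (hv0 x) (apply_nonneg p _)
  have husc : ∀ g ∈ W, UpperSemicontinuous (u g) := fun g hg =>
    aux_usc hvusc hv0 (hp.comp (hC g hg)) (fun x => apply_nonneg p _)
  have hwD : ∀ E : Set Ω, wDistOn p v E f W
      = ⨅ g ∈ W, ⨆ x ∈ E, ENNReal.ofReal (u g x) := fun E => rfl
  set d := wDistOn p v (Set.univ : Set Ω) f W with hd
  by_cases hd0 : d = 0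
  · refine ⟨∅, empty_subset _, fun φ _ _ x hx => absurd hx (notMem_empty x), ?_⟩
    rw [hd0]
    calc wDistOn p v ∅ f W = ⨅ g ∈ W, (0:ℝ≥0∞) := by simp [wDistOn]
      _ = 0 := by rw [iInf_subtype']; exact iInf_const
  -- basic facts about sup and inf
  have hsup_le_univ : ∀ (g : Ω → X) (E : Set Ω),
      (⨆ x ∈ E, ENNReal.ofReal (u g x)) ≤ ⨆ x, ENNReal.ofReal (u g x) :=
    fun g E => iSup₂_le fun x _ => le_iSup (fun x => ENNReal.ofReal (u g x)) x
  have hDle : ∀ E : Set Ω, wDistOn p v E f W ≤ d := by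
    intro E
    rw [hwD, hd, hwD]
    exact iInf_mono fun g => iInf_mono fun _ => iSup₂_le fun x _ =>
      le_iSup₂ (f := fun x (_ : x ∈ (univ : Set Ω)) => ENNReal.ofReal (u g x)) x (mem_univ x)
  -- the Zorn family
  set P : Set (Set Ω) := {E | IsClosed E ∧ d ≤ wDistOn p v E f W} with hP
  have hZorn : ∀ c ⊆ P, IsChain (· ⊆ ·) c → c.Nonempty →
      ∃ lb ∈ P, ∀ s ∈ c, lb ⊆ s := by
    intro c hcP hchain hcne
    refine ⟨⋂₀ c, ⟨isClosed_sInter fun E hE => (hcP hE).1, ?_⟩, fun s hs => sInter_subset_of_mem hs⟩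
    rw [hwD]
    refine le_iInf₂ fun g hg => ?_
    by_contra hlt
    push_neg at hlt
    obtain ⟨r, hr0, hrsup, hrd⟩ := ENNReal.lt_iff_exists_real_btwn.1 hlt
    have hrpos : 0 < r := ENNReal.ofReal_pos.1 (lt_of_le_of_lt zero_le hrsup)
    set K := {x | r ≤ u g x} with hK
    have hKc : IsCompact K := h0 g hg r hrpos
    have hKcl : IsClosed K := (husc g hg).isClosed_preimage r
    haveI : Nonempty c := hcne.to_subtype
    have hne : ∀ E : c, ((E : Set Ω) ∩ K).Nonempty := by
      intro ⟨E, hE⟩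
      have h1 : ENNReal.ofReal r < ⨆ x ∈ E, ENNReal.ofReal (u g x) := by
        refine lt_of_lt_of_le hrd ?_
        have h2 : d ≤ wDistOn p v E f W := (hcP hE).2
        refine le_trans h2 ?_
        rw [hwD]
        exact iInf₂_le g hg
      rw [lt_iSup_iff] at h1
      obtain ⟨x, hx⟩ := h1
      rw [lt_iSup_iff] at hx
      obtain ⟨hxE, hx⟩ := hx
      have : r < u g x := by
        by_contra hcon
        push_neg at hcon
        exact absurd (ENNReal.ofReal_le_ofReal hcon) (not_le.2 hx)
      exact ⟨x, hxE, this.le⟩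
    have hdir : Directed (· ⊇ ·) (fun E : c => (E : Set Ω) ∩ K) := by
      intro ⟨E, hE⟩ ⟨F, hF⟩
      rcases hchain.total hE hF with hEF | hFE
      · exact ⟨⟨E, hE⟩, inter_subset_inter_left K (le_refl E), inter_subset_inter_left K hEF⟩
      · exact ⟨⟨F, hF⟩, inter_subset_inter_left K hFE, inter_subset_inter_left K (le_refl F)⟩
    have hnem := IsCompact.nonempty_iInter_of_directed_nonempty_isCompact_isClosed
      (fun E : c => (E : Set Ω) ∩ K) hdir hne
      (fun ⟨E, hE⟩ => hKc.inter_left (hcP hE).1)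
      (fun ⟨E, hE⟩ => IsClosed.inter (hcP hE).1 hKcl)
    obtain ⟨x, hx⟩ := hnem
    rw [mem_iInter] at hx
    have hxint : x ∈ ⋂₀ c := by
      rw [mem_sInter]
      intro E hE
      exact ((hx ⟨E, hE⟩).1)
    have hxK : x ∈ K := (hx (Classical.arbitrary _)).2
    have : ENNReal.ofReal (u g x) < ENNReal.ofReal r := lt_of_le_of_lt
      (le_iSup₂ (f := fun y (_ : y ∈ ⋂₀ c) => ENNReal.ofReal (u g y)) x hxint) hrsup
    have : u g x < r := by
      by_contra hcon
      push_neg at hcon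
      exact absurd (ENNReal.ofReal_le_ofReal hcon) (not_le.2 this)
    exact absurd hxK (by simpa [hK] using not_le.2 this)
  obtain ⟨S, _, hSP, hSmin⟩ := zorn_superset_nonempty P hZorn univ ⟨isClosed_univ, le_of_eq hd⟩
  set S' : Set Ω := S ∩ {x | v x ≠ 0} with hS'
  have hsup' : ∀ g : Ω → X, (⨆ x ∈ S', ENNReal.ofReal (u g x))
      = ⨆ x ∈ S, ENNReal.ofReal (u g x) := by
    intro g
    apply le_antisymm
    · exact iSup₂_le fun x hx =>
        le_iSup₂ (f := fun x (_ : x ∈ S) => ENNReal.ofReal (u g x)) x hx.1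
    · refine iSup₂_le fun x hx => ?_
      by_cases hvx : v x = 0
      · have hz : u g x = 0 := by simp [hu, hvx]
        rw [hz]
        simp
      · exact le_iSup₂ (f := fun x (_ : x ∈ S') => ENNReal.ofReal (u g x)) x ⟨hx, hvx⟩
  have hDS : wDistOn p v S f W = d := le_antisymm (hDle S) hSP.2
  have hDS' : wDistOn p v S' f W = d := by
    rw [hwD]
    simp only [hsup']
    rw [← hwD]
    exact hDS
  refine ⟨S', fun x hx => subset_closure hx.2, ?_, hDS'.trans hd⟩
  intro φ hφA hφr
  have key : ∀ x₀ ∈ S', ∀ y₀ ∈ S', ∀ a b : ℝ, a ∈ Icc (0:ℝ) 1 → b ∈ Icc (0:ℝ) 1 →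
      (a : ℂ) = φ x₀ → (b : ℂ) = φ y₀ → a < b → False := by
    intro x₀ hx₀ y₀ hy₀ a b ha hb hax hby hab
    have hb0 : 0 < b := lt_of_le_of_lt ha.1 hab
    set T : Ω → ℝ := fun x => (φ x).re with hT
    have hTc : Continuous T := Complex.continuous_re.comp (hAc φ hφA)
    set c₁ : ℝ := (2*a+b)/3 with hc₁
    set c₂ : ℝ := (a+2*b)/3 with hc₂
    have hc₁pos : 0 < c₁ := by rw [hc₁]; linarith [ha.1]
    have hc₁₂ : c₁ < c₂ := by rw [hc₁, hc₂]; linarith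
    have hac₁ : a < c₁ := by rw [hc₁]; linarith
    have hc₂b : c₂ < b := by rw [hc₂]; linarith
    have hc₂1 : c₂ < 1 := lt_of_lt_of_le hc₂b hb.2
    -- the two closed proper subsets
    set EX : Set Ω := closure (S' ∩ T ⁻¹' Iic c₂) with hEX
    set EY : Set Ω := closure (S' ∩ T ⁻¹' Ici c₁) with hEY
    have hEXS : EX ⊆ S := closure_minimal (fun z hz => hz.1.1) hSP.1
    have hEYS : EY ⊆ S := closure_minimal (fun z hz => hz.1.1) hSP.1
    have hEXsub : EX ⊆ T ⁻¹' Iic c₂ :=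
      closure_minimal (fun z hz => hz.2) (isClosed_Iic.preimage hTc)
    have hEYsub : EY ⊆ T ⁻¹' Ici c₁ :=
      closure_minimal (fun z hz => hz.2) (isClosed_Ici.preimage hTc)
    have hTy : T y₀ = b := by rw [hT]; simp [← hby]
    have hTx : T x₀ = a := by rw [hT]; simp [← hax]
    have hyEX : y₀ ∉ EX := fun hmem => by
      have := hEXsub hmem
      rw [mem_preimage, mem_Iic, hTy] at this
      linarith
    have hxEY : x₀ ∉ EY := fun hmem => by
      have := hEYsub hmem
      rw [mem_preimage, mem_Ici, hTx] at this
      linarith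
    have hEXP : wDistOn p v EX f W < d := by
      rcases lt_or_ge (wDistOn p v EX f W) d with h | h
      · exact h
      · exfalso
        have hmem : EX ∈ P := ⟨isClosed_closure, h⟩
        have := hSmin hmem hEXS
        exact hyEX (this hy₀.1)
    have hEYP : wDistOn p v EY f W < d := by
      rcases lt_or_ge (wDistOn p v EY f W) d with h | h
      · exact h
      · exfalso
        have hmem : EY ∈ P := ⟨isClosed_closure, h⟩
        have := hSmin hmem hEYS
        exact hxEY (this hx₀.1)
    obtain ⟨r, hr0, hmaxr, hrd⟩ :=
      ENNReal.lt_iff_exists_real_btwn.1 (max_lt hEXP hEYP)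
    obtain ⟨r₂, hr₂0, hrr₂, hr₂d⟩ := ENNReal.lt_iff_exists_real_btwn.1 hrd
    have hr₂pos : 0 < r₂ := ENNReal.ofReal_pos.1 (lt_of_le_of_lt zero_le hrr₂)
    have hrpos : 0 < r := ENNReal.ofReal_pos.1 (lt_of_le_of_lt zero_le hmaxr)
    have hrltr₂ : r < r₂ := (ENNReal.ofReal_lt_ofReal_iff hr₂pos).1 hrr₂
    -- choose good approximants on EX and EY
    obtain ⟨g₁, hg₁, hg₁r⟩ : ∃ g ∈ W, (⨆ x ∈ EX, ENNReal.ofReal (u g x)) < ENNReal.ofReal r := by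
      have h1 : wDistOn p v EX f W < ENNReal.ofReal r :=
        lt_of_le_of_lt (le_max_left _ _) hmaxr
      rw [hwD] at h1
      obtain ⟨g, hg⟩ := iInf_lt_iff.1 h1
      obtain ⟨hgW, hg2⟩ := iInf_lt_iff.1 hg
      exact ⟨g, hgW, hg2⟩
    obtain ⟨g₂, hg₂, hg₂r⟩ : ∃ g ∈ W, (⨆ x ∈ EY, ENNReal.ofReal (u g x)) < ENNReal.ofReal r := by
      have h1 : wDistOn p v EY f W < ENNReal.ofReal r :=
        lt_of_le_of_lt (le_max_right _ _) hmaxr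
      rw [hwD] at h1
      obtain ⟨g, hg⟩ := iInf_lt_iff.1 h1
      obtain ⟨hgW, hg2⟩ := iInf_lt_iff.1 hg
      exact ⟨g, hgW, hg2⟩
    have hg₁EX : ∀ z ∈ EX, u g₁ z < r := by
      intro z hz
      have h1 : ENNReal.ofReal (u g₁ z) < ENNReal.ofReal r :=
        lt_of_le_of_lt (le_iSup₂ (f := fun x (_ : x ∈ EX) => ENNReal.ofReal (u g₁ x)) z hz) hg₁r
      by_contra hcon
      push_neg at hcon
      exact absurd (ENNReal.ofReal_le_ofReal hcon) (not_le.2 h1)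
    have hg₂EY : ∀ z ∈ EY, u g₂ z < r := by
      intro z hz
      have h1 : ENNReal.ofReal (u g₂ z) < ENNReal.ofReal r :=
        lt_of_le_of_lt (le_iSup₂ (f := fun x (_ : x ∈ EY) => ENNReal.ofReal (u g₂ x)) z hz) hg₂r
      by_contra hcon
      push_neg at hcon
      exact absurd (ENNReal.ofReal_le_ofReal hcon) (not_le.2 h1)
    -- global bounds
    obtain ⟨M₁, hM₁0, hM₁⟩ := aux_bdd (husc g₁ hg₁) (h0 g₁ hg₁ 1 one_pos)
    obtain ⟨M₂, hM₂0, hM₂⟩ := aux_bdd (husc g₂ hg₂) (h0 g₂ hg₂ 1 one_pos)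
    set M : ℝ := max M₁ M₂ with hM
    have hM0 : 0 ≤ M := le_trans hM₁0 (le_max_left _ _)
    have hMg₁ : ∀ x, u g₁ x ≤ M := fun x => le_trans (hM₁ x) (le_max_left _ _)
    have hMg₂ : ∀ x, u g₂ x ≤ M := fun x => le_trans (hM₂ x) (le_max_right _ _)
    set δ : ℝ := (r₂ - r)/(M+1) with hδ
    have hδpos : 0 < δ := div_pos (by linarith) (by linarith)
    have hδM : δ * (M+1) = r₂ - r := div_mul_cancel₀ _ (by linarith)
    obtain ⟨n, m, hP01, hPlow, hPhigh⟩ := aux_peak hc₁pos hc₁₂ hc₂1 hδpos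
    set ψ : Ω → ℂ := fun x => 1 - (1 - φ x ^ n) ^ m with hψ
    have hφM : IsMultOf W φ := hmul φ hφA
    have hψW : IsMultOf W ψ := hφM.peak n m
    set gnew : Ω → X := fun x => ψ x • g₂ x + (1 - ψ x) • g₁ x with hgnew
    have hgnewW : gnew ∈ W := hψW g₂ hg₂ g₁ hg₁
    -- pointwise estimate on S
    have key2 : ∀ z ∈ S, u gnew z ≤ r₂ := by
      intro z hz
      by_cases hvz : v z = 0
      · have hz0 : u gnew z = 0 := by simp [hu, hvz]
        rw [hz0]; linarith
      obtain ⟨t, ht01, htz⟩ := hφr z ⟨hz, hvz⟩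
      obtain ⟨w, hw⟩ : ∃ w : ℝ, w = 1 - (1 - t^n)^m := ⟨_, rfl⟩
      obtain ⟨hw0, hw1⟩ : 0 ≤ w ∧ w ≤ 1 := by rw [hw]; exact hP01 t ht01.1 ht01.2
      have hψz : ψ z = Complex.ofReal w := by
        rw [hψ, hw]
        simp only [← htz]
        push_cast
        ring
      have hdecomp : f z - gnew z = ψ z • (f z - g₂ z) + (1 - ψ z) • (f z - g₁ z) := by
        rw [hgnew]
        module
      have hq : p (f z - gnew z) ≤ w * p (f z - g₂ z) + (1-w) * p (f z - g₁ z) := by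
        rw [hdecomp]
        refine le_trans (map_add_le_add p _ _) ?_
        rw [map_smul_eq_mul, map_smul_eq_mul, hψz]
        have e1 : ‖(Complex.ofReal w)‖ = w := by
          rw [Complex.norm_real]; exact Real.norm_of_nonneg hw0
        have e2 : ‖1 - (Complex.ofReal w)‖ = 1 - w := by
          rw [show (1:ℂ) - Complex.ofReal w = Complex.ofReal (1-w) by push_cast; ring,
            Complex.norm_real]
          exact Real.norm_of_nonneg (by linarith)
        rw [e1, e2]
      have hmain : u gnew z ≤ w * u g₂ z + (1-w) * u g₁ z := by
        have h1 : v z * p (f z - gnew z)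
            ≤ v z * (w * p (f z - g₂ z) + (1-w) * p (f z - g₁ z)) :=
          mul_le_mul_of_nonneg_left hq (hv0 z)
        calc u gnew z = v z * p (f z - gnew z) := rfl
          _ ≤ v z * (w * p (f z - g₂ z) + (1-w) * p (f z - g₁ z)) := h1
          _ = w * u g₂ z + (1-w) * u g₁ z := by simp only [hu]; ring
      have hTz : T z = t := by rw [hT]; simp [← htz]
      have hu₁0 : 0 ≤ u g₁ z := hu0 g₁ z
      have hu₂0 : 0 ≤ u g₂ z := hu0 g₂ z
      rcases le_or_gt t c₁ with h1 | h1
      · have hzEX : z ∈ EX := subset_closure ⟨⟨hz, hvz⟩, by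
          rw [mem_preimage, mem_Iic, hTz]; linarith⟩
        have hug₁ : u g₁ z < r := hg₁EX z hzEX
        have hwδ : w ≤ δ := by rw [hw]; exact hPlow t ht01.1 h1
        nlinarith [hMg₂ z, mul_le_mul hwδ (hMg₂ z) hu₂0 hδpos.le]
      rcases le_or_gt t c₂ with h2 | h2
      · have hzEX : z ∈ EX := subset_closure ⟨⟨hz, hvz⟩, by
          rw [mem_preimage, mem_Iic, hTz]; linarith⟩
        have hzEY : z ∈ EY := subset_closure ⟨⟨hz, hvz⟩, by
          rw [mem_preimage, mem_Ici, hTz]; linarith⟩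
        have hug₁ : u g₁ z < r := hg₁EX z hzEX
        have hug₂ : u g₂ z < r := hg₂EY z hzEY
        nlinarith
      · have hzEY : z ∈ EY := subset_closure ⟨⟨hz, hvz⟩, by
          rw [mem_preimage, mem_Ici, hTz]; linarith⟩
        have hug₂ : u g₂ z < r := hg₂EY z hzEY
        have hwδ : 1 - w ≤ δ := by
          have := hPhigh t h2.le ht01.2
          rw [hw]; linarith
        nlinarith [hMg₁ z, mul_le_mul hwδ (hMg₁ z) hu₁0 hδpos.le]
    have hfinal : d ≤ ENNReal.ofReal r₂ := by
      refine le_trans hSP.2 ?_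
      rw [hwD]
      refine le_trans (iInf₂_le gnew hgnewW) ?_
      exact iSup₂_le fun z hz => ENNReal.ofReal_le_ofReal (key2 z hz)
    exact absurd hfinal (not_le.2 hr₂d)
  intro x hx y hy
  obtain ⟨a, ha01, hax⟩ := hφr x hx
  obtain ⟨b, hb01, hby⟩ := hφr y hy
  by_contra hne
  have hab : a ≠ b := by
    intro h
    rw [← hax, ← hby, h] at hne
    exact hne rfl
  rcases hab.lt_or_gt with hlt | hlt
  · exact key x hx y hy a b ha01 hb01 hax hby hlt
  · exact key y hy x hx b a hb01 ha01 hby hax hlt
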